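/- Let (A, L) be a Lipschitz pair and (φ_n) a sequence of states of A with mk_L(φ_n, φ) → 0 for some state φ. Then φ_n → φ in the weak* topology, i.e. φ_n(a) → φ(a) for every a ∈ A. -/

import Mathlib

open scoped ENNReal

section common
variable {A : Type*} [NormedRing A] [StarRing A] [NormedAlgebra ℂ A]

def IsState (φ : A →ₗ[ℂ] ℂ) : Prop :=
  φ 1 = 1 ∧ ∀ a : A, ∃ r : ℝ, 0 ≤ r ∧ φ (star a * a) = r

noncomputable def mkDist (L : A → ℝ≥0∞) (φ ψ : A →ₗ[ℂ] ℂ) : ℝ≥0∞ :=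
  ⨆ a ∈ {a : A | IsSelfAdjoint a ∧ L a ≤ 1}, edist (φ a) (ψ a)
end common

theorem state_bound {A : Type*} [NormedRing A] [StarRing A] [CStarRing A]
    [NormedAlgebra ℂ A] [CompleteSpace A] [StarModule ℂ A] [Nontrivial A]
    (φ : A →ₗ[ℂ] ℂ) (hφ : IsState φ) (a : A) (ha : IsSelfAdjoint a) :
    ∃ t : ℝ, φ a = t ∧ |t| ≤ ‖a‖ := by
  letI : CStarAlgebra A := { }
  have aux : ∀ c : A, IsSelfAdjoint c → ∃ r : ℝ, 0 ≤ r ∧ φ c = (‖c‖ : ℂ) - r := by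
    intro c hc
    set M : ℝ := ‖c‖ with hM
    have hspec : ∀ x ∈ spectrum ℝ c, |x| ≤ M := fun x hx => spectrum.norm_le_norm_of_mem hx
    set f : ℝ → ℝ := fun x => Real.sqrt (M - x) with hf
    have hfc : Continuous f := Real.continuous_sqrt.comp (by continuity)
    set b : A := cfc f c with hb
    have hbsa : IsSelfAdjoint b := cfc_predicate f c
    have hbb : b * b = algebraMap ℝ A M - c := by
      rw [hb, ← cfc_mul f f c hfc.continuousOn hfc.continuousOn]
      have h2 : cfc (fun x => f x * f x) c = cfc (fun x : ℝ => M - x) c := by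
        apply cfc_congr
        intro x hx
        have h1 : 0 ≤ M - x := by have := abs_le.mp (hspec x hx); linarith
        exact Real.mul_self_sqrt h1
      have h3 : cfc (fun x : ℝ => M - x) c
          = cfc (fun _ : ℝ => M) c - cfc (fun x : ℝ => x) c :=
        cfc_sub _ _ c continuousOn_const continuousOn_id
      rw [h2, h3, cfc_const M c, cfc_id' ℝ c]
    obtain ⟨r, hr0, hr⟩ := hφ.2 b
    refine ⟨r, hr0, ?_⟩
    rw [hbsa.star_eq, hbb, map_sub] at hr
    have hM' : φ (algebraMap ℝ A M) = (M : ℂ) := by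
      rw [IsScalarTower.algebraMap_apply ℝ ℂ A, Algebra.algebraMap_eq_smul_one, map_smul,
        hφ.1, smul_eq_mul, mul_one, Complex.coe_algebraMap]
    rw [hM'] at hr
    linear_combination -hr
  obtain ⟨r, hr0, h1⟩ := aux a ha
  obtain ⟨r', hr0', h2⟩ := aux (-a) ha.neg
  rw [map_neg, norm_neg] at h2
  refine ⟨‖a‖ - r, by rw [h1]; push_cast; ring, abs_le.mpr ⟨?_, by linarith⟩⟩
  have : (r' : ℂ) + r = 2 * ‖a‖ := by linear_combination h1 + h2
  have : r' + r = 2 * ‖a‖ := by exact_mod_cast this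
  linarith

/-- Convergence of states in the Monge–Kantorovich metric of a Lipschitz pair implies
weak* convergence. -/
theorem stmt15 {A : Type*} [NormedRing A] [StarRing A] [CStarRing A]
    [NormedAlgebra ℂ A] [CompleteSpace A] [StarModule ℂ A]
    (L : A → ℝ≥0∞)
    -- Lipschitz pair data:
    (hdense : ∀ a : A, IsSelfAdjoint a →
      a ∈ closure {b : A | IsSelfAdjoint b ∧ L b ≠ ⊤})
    (hsub : ∀ a b : A, IsSelfAdjoint a → IsSelfAdjoint b → L (a + b) ≤ L a + L b)
    (hsmul : ∀ (r : ℝ) (a : A), IsSelfAdjoint a →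
      L (((r : ℂ)) • a) = (‖r‖₊ : ℝ≥0∞) * L a)
    (hker : ∀ a : A, IsSelfAdjoint a → (L a = 0 ↔ ∃ r : ℝ, a = ((r : ℂ)) • 1))
    (φ : ℕ → A →ₗ[ℂ] ℂ) (hφ : ∀ n, IsState (φ n))
    (ψ : A →ₗ[ℂ] ℂ) (hψ : IsState ψ)
    (hconv : Filter.Tendsto (fun n => mkDist L (φ n) ψ) Filter.atTop (nhds 0)) :
    ∀ a : A, Filter.Tendsto (fun n => φ n a) Filter.atTop (nhds (ψ a)) := by
  haveI : Nontrivial A := by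
    refine ⟨1, 0, fun h => ?_⟩
    have := hψ.1
    rw [h, map_zero] at this
    exact one_ne_zero this.symm
  -- Step 1: pointwise convergence on selfadjoint elements of finite Lipschitz seminorm
  have step1 : ∀ b : A, IsSelfAdjoint b → L b ≠ ⊤ →
      Filter.Tendsto (fun n => φ n b) Filter.atTop (nhds (ψ b)) := by
    intro b hb hLb
    by_cases h0 : L b = 0
    · obtain ⟨r, rfl⟩ := (hker b hb).mp h0
      have hval : ∀ (χ : A →ₗ[ℂ] ℂ), χ 1 = 1 → χ (((r : ℂ)) • 1) = (r : ℂ) := by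
        intro χ hχ
        rw [map_smul, hχ, smul_eq_mul, mul_one]
      simp only [hval (φ _) (hφ _).1, hval ψ hψ.1]
      exact tendsto_const_nhds
    · set t : ℝ := (L b).toReal with ht
      have htpos : 0 < t := ENNReal.toReal_pos h0 hLb
      have hLbt : L b = ENNReal.ofReal t := (ENNReal.ofReal_toReal hLb).symm
      set b' : A := (((t⁻¹ : ℝ) : ℂ)) • b with hb'
      have hb'sa : IsSelfAdjoint b' := by
        rw [hb']
        rw [IsSelfAdjoint, star_smul, Complex.star_def, Complex.conj_ofReal, hb.star_eq]
      have hLb' : L b' ≤ 1 := by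
        rw [hb', hsmul _ _ hb, hLbt]
        rw [ENNReal.ofReal]
        rw [← ENNReal.coe_mul]
        have : ‖t⁻¹‖₊ * t.toNNReal = 1 := by
          ext
          simp only [NNReal.coe_mul, coe_nnnorm, Real.norm_eq_abs,
            Real.coe_toNNReal _ htpos.le, NNReal.coe_one, abs_inv, abs_of_pos htpos]
          exact inv_mul_cancel₀ htpos.ne'
        rw [this, ENNReal.coe_one]
      have hmem : b' ∈ {a : A | IsSelfAdjoint a ∧ L a ≤ 1} := ⟨hb'sa, hLb'⟩
      have hle : ∀ n, edist (φ n b) (ψ b) ≤ (‖t‖₊ : ℝ≥0∞) * mkDist L (φ n) ψ := by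
        intro n
        have hbeq : ((t : ℂ)) • b' = b := by
          rw [hb', smul_smul]
          norm_cast
          rw [mul_inv_cancel₀ htpos.ne', one_smul]
        have e1 : φ n b = ((t : ℂ)) • φ n b' := by rw [← map_smul, hbeq]
        have e2 : ψ b = ((t : ℂ)) • ψ b' := by rw [← map_smul, hbeq]
        have e3 : edist (φ n b) (ψ b) = (‖(t : ℂ)‖₊ : ℝ≥0∞) * edist (φ n b') (ψ b') := by
          rw [e1, e2, edist_smul₀]
          rfl
        rw [e3]
        gcongr
        · simp
        · exact le_iSup₂_of_le b' hmem le_rfl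
      have hsq : Filter.Tendsto (fun n => edist (φ n b) (ψ b)) Filter.atTop (nhds 0) := by
        have hub : Filter.Tendsto (fun n => (‖t‖₊ : ℝ≥0∞) * mkDist L (φ n) ψ)
            Filter.atTop (nhds 0) := by
          have := ENNReal.Tendsto.const_mul (a := (‖t‖₊ : ℝ≥0∞)) hconv
            (Or.inr ENNReal.coe_ne_top)
          simpa using this
        exact tendsto_of_tendsto_of_tendsto_of_le_of_le tendsto_const_nhds hub
          (fun n => zero_le) hle
      exact tendsto_iff_edist_tendsto_0.mpr hsq
  -- Step 2: pointwise convergence on all selfadjoint elements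
  have step2 : ∀ a : A, IsSelfAdjoint a →
      Filter.Tendsto (fun n => φ n a) Filter.atTop (nhds (ψ a)) := by
    intro a ha
    rw [Metric.tendsto_atTop]
    intro ε hε
    obtain ⟨b, hbmem, hab⟩ := Metric.mem_closure_iff.mp (hdense a ha) (ε / 4) (by linarith)
    obtain ⟨hbsa, hbL⟩ := hbmem
    obtain ⟨N, hN⟩ := Metric.tendsto_atTop.mp (step1 b hbsa hbL) (ε / 4) (by linarith)
    refine ⟨N, fun n hn => ?_⟩
    have habsa : IsSelfAdjoint (a - b) := ha.sub hbsa
    have habn : ‖a - b‖ < ε / 4 := by rwa [dist_eq_norm] at hab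
    have h1 : ∀ (χ : A →ₗ[ℂ] ℂ), IsState χ → ‖χ a - χ b‖ < ε / 4 := by
      intro χ hχ
      obtain ⟨s, hs, hsle⟩ := state_bound χ hχ (a - b) habsa
      rw [← map_sub, hs]
      calc ‖(s : ℂ)‖ = |s| := Complex.norm_real s
        _ ≤ ‖a - b‖ := hsle
        _ < ε / 4 := habn
    calc dist (φ n a) (ψ a)
        ≤ dist (φ n a) (φ n b) + dist (φ n b) (ψ b) + dist (ψ b) (ψ a) := dist_triangle4 _ _ _ _
      _ < ε / 4 + ε / 4 + ε / 4 := by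
          gcongr
          · rw [dist_eq_norm]; exact h1 (φ n) (hφ n)
          · exact hN n hn
          · rw [dist_comm, dist_eq_norm]; exact h1 ψ hψ
      _ < ε := by linarith
  -- Step 3: general elements via real/imaginary parts
  intro a
  have hre := step2 (realPart a) (realPart a).2
  have him := step2 (imaginaryPart a) (imaginaryPart a).2
  have hcomb := hre.add (him.const_mul Complex.I)
  have heq : ∀ (χ : A →ₗ[ℂ] ℂ),
      χ (realPart a : A) + Complex.I * χ (imaginaryPart a : A) = χ a := by
    intro χ
    rw [← smul_eq_mul, ← map_smul, ← map_add, realPart_add_I_smul_imaginaryPart]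
  simpa only [heq] using hcomb
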